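/- (EIF identification of the CPCEs.) Under Assumptions 1–4, for each u ∈ {00,10,11}: (i) the denominator score identifies the principal score, E[g^u(W)|X=x] = e^u(x) for all x; and (ii) the CPCE is identified by the efficient-influence-function ratio, τ^u(x) = E[ (φ_{1,u}(W) − φ_{0,u}(W)) / E(g^u(W)|X) | X=x ] for all x. -/

import Mathlib

open MeasureTheory Filter
open scoped Classical

noncomputable section

/-- Conditional mean of `f` given the event `A`: `E[f | A] = (∫_A f dP) / P(A)`. -/
def condMeanOn {Ω : Type*} [MeasurableSpace Ω] (P : Measure Ω) (A : Set Ω) (f : Ω → ℝ) : ℝ :=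
  (∫ ω in A, f ω ∂P) / (P A).toReal

/-- Conditional probability of the event `A` given the event `B`: `P(A | B)`. -/
def condProbOn {Ω : Type*} [MeasurableSpace Ω] (P : Measure Ω) (A B : Set Ω) : ℝ :=
  (P (A ∩ B)).toReal / (P B).toReal

/-- Observed-cell outcome regression `μ_{zs}(x) = E(Y | Z = z, S = s, X = x)`. -/
def muZS {Ω 𝓧 : Type*} [MeasurableSpace Ω] (P : Measure Ω) (X : Ω → 𝓧) (Z S Y : Ω → ℝ)
    (z s : ℝ) (x : 𝓧) : ℝ :=
  condMeanOn P {ω | Z ω = z ∧ S ω = s ∧ X ω = x} Y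

/-- Propensity score `π(x) = P(Z = 1 | X = x)`. -/
def piX {Ω 𝓧 : Type*} [MeasurableSpace Ω] (P : Measure Ω) (X : Ω → 𝓧) (Z : Ω → ℝ)
    (x : 𝓧) : ℝ :=
  condProbOn P {ω | Z ω = 1} {ω | X ω = x}

/-- Principal score `p_z(x) = P(S = 1 | Z = z, X = x)`. -/
def pZs {Ω 𝓧 : Type*} [MeasurableSpace Ω] (P : Measure Ω) (X : Ω → 𝓧) (Z S : Ω → ℝ)
    (z : ℝ) (x : 𝓧) : ℝ :=
  condProbOn P {ω | S ω = 1} {ω | Z ω = z ∧ X ω = x}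

/-- Conditional principal causal effect
`τ^{(a,b)}(x) = E(Y(1) - Y(0) | S(1) = a, S(0) = b, X = x)`. -/
def tauPO {Ω 𝓧 : Type*} [MeasurableSpace Ω] (P : Measure Ω) (X : Ω → 𝓧)
    (S1 S0 Y1 Y0 : Ω → ℝ) (a b : ℝ) (x : 𝓧) : ℝ :=
  condMeanOn P {ω | S1 ω = a ∧ S0 ω = b ∧ X ω = x} (fun ω => Y1 ω - Y0 ω)

/-- Augmented score `ψ_{a,f}(W)` built from the true nuisance functions:
`ψ_{a,f}(W) = 1(Z = a)/P(Z = a | X) · (f(W) - E[f | X, Z = a]) + E[f | X, Z = a]`. -/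
def psiA {Ω 𝓧 : Type*} [MeasurableSpace Ω] (P : Measure Ω) (X : Ω → 𝓧) (Z : Ω → ℝ)
    (a : ℝ) (f : Ω → ℝ) : Ω → ℝ :=
  fun ω =>
    (if Z ω = a then (1 : ℝ) else 0) / condProbOn P {ω' | Z ω' = a} {ω' | X ω' = X ω}
        * (f ω - condMeanOn P {ω' | Z ω' = a ∧ X ω' = X ω} f)
      + condMeanOn P {ω' | Z ω' = a ∧ X ω' = X ω} f

/-- EIF component `φ_{1,10}`. -/
def phiA1_10 {Ω 𝓧 : Type*} [MeasurableSpace Ω] (P : Measure Ω) (X : Ω → 𝓧)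
    (Z S Y : Ω → ℝ) : Ω → ℝ :=
  fun ω =>
    ((pZs P X Z S 1 (X ω) - pZs P X Z S 0 (X ω)) / pZs P X Z S 1 (X ω))
        * psiA P X Z 1 (fun ω' => Y ω' * S ω') ω
      - muZS P X Z S Y 1 1 (X ω)
          * (psiA P X Z 0 S ω
              - (pZs P X Z S 0 (X ω) / pZs P X Z S 1 (X ω)) * psiA P X Z 1 S ω)

/-- EIF component `φ_{0,10}`. -/
def phiA0_10 {Ω 𝓧 : Type*} [MeasurableSpace Ω] (P : Measure Ω) (X : Ω → 𝓧)
    (Z S Y : Ω → ℝ) : Ω → ℝ :=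
  fun ω =>
    ((pZs P X Z S 1 (X ω) - pZs P X Z S 0 (X ω)) / (1 - pZs P X Z S 0 (X ω)))
        * psiA P X Z 0 (fun ω' => Y ω' * (1 - S ω')) ω
      - muZS P X Z S Y 0 0 (X ω)
          * (psiA P X Z 1 (fun ω' => 1 - S ω') ω
              - ((1 - pZs P X Z S 1 (X ω)) / (1 - pZs P X Z S 0 (X ω)))
                  * psiA P X Z 0 (fun ω' => 1 - S ω') ω)

/-- EIF component `φ_{1,11}`. -/
def phiA1_11 {Ω 𝓧 : Type*} [MeasurableSpace Ω] (P : Measure Ω) (X : Ω → 𝓧)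
    (Z S Y : Ω → ℝ) : Ω → ℝ :=
  fun ω =>
    (pZs P X Z S 0 (X ω) / pZs P X Z S 1 (X ω))
        * psiA P X Z 1 (fun ω' => Y ω' * S ω') ω
      + muZS P X Z S Y 1 1 (X ω)
          * (psiA P X Z 0 S ω
              - (pZs P X Z S 0 (X ω) / pZs P X Z S 1 (X ω)) * psiA P X Z 1 S ω)

/-- EIF component `φ_{0,11}`. -/
def phiA0_11 {Ω 𝓧 : Type*} [MeasurableSpace Ω] (P : Measure Ω) (X : Ω → 𝓧)
    (Z S Y : Ω → ℝ) : Ω → ℝ :=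
  psiA P X Z 0 (fun ω' => Y ω' * S ω')

/-- EIF component `φ_{1,00}`. -/
def phiA1_00 {Ω 𝓧 : Type*} [MeasurableSpace Ω] (P : Measure Ω) (X : Ω → 𝓧)
    (Z S Y : Ω → ℝ) : Ω → ℝ :=
  psiA P X Z 1 (fun ω' => Y ω' * (1 - S ω'))

/-- EIF component `φ_{0,00}`. -/
def phiA0_00 {Ω 𝓧 : Type*} [MeasurableSpace Ω] (P : Measure Ω) (X : Ω → 𝓧)
    (Z S Y : Ω → ℝ) : Ω → ℝ :=
  fun ω =>
    ((1 - pZs P X Z S 1 (X ω)) / (1 - pZs P X Z S 0 (X ω)))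
        * psiA P X Z 0 (fun ω' => Y ω' * (1 - S ω')) ω
      + muZS P X Z S Y 0 0 (X ω)
          * (psiA P X Z 1 (fun ω' => 1 - S ω') ω
              - ((1 - pZs P X Z S 1 (X ω)) / (1 - pZs P X Z S 0 (X ω)))
                  * psiA P X Z 0 (fun ω' => 1 - S ω') ω)

/-- Denominator score `g^{00} = ψ_{1,1-S}`. -/
def gA00 {Ω 𝓧 : Type*} [MeasurableSpace Ω] (P : Measure Ω) (X : Ω → 𝓧)
    (Z S : Ω → ℝ) : Ω → ℝ :=
  psiA P X Z 1 (fun ω' => 1 - S ω')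

/-- Denominator score `g^{10} = ψ_{1,S} - ψ_{0,S}`. -/
def gA10 {Ω 𝓧 : Type*} [MeasurableSpace Ω] (P : Measure Ω) (X : Ω → 𝓧)
    (Z S : Ω → ℝ) : Ω → ℝ :=
  fun ω => psiA P X Z 1 S ω - psiA P X Z 0 S ω

/-- Denominator score `g^{11} = ψ_{0,S}`. -/
def gA11 {Ω 𝓧 : Type*} [MeasurableSpace Ω] (P : Measure Ω) (X : Ω → 𝓧)
    (Z S : Ω → ℝ) : Ω → ℝ :=
  psiA P X Z 0 S


set_option linter.unusedSectionVars false
set_option linter.unusedVariables false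
set_option maxHeartbeats 1000000

section Aux
variable {Ω 𝓧 : Type*} [MeasurableSpace Ω] {P : Measure Ω} [IsProbabilityMeasure P]

lemma meas_toReal_ne_zero {A : Set Ω} (h : P A ≠ 0) : (P A).toReal ≠ 0 :=
  ENNReal.toReal_ne_zero.2 ⟨h, measure_ne_top P A⟩

lemma setIntegral_eq_condMeanOn_mul {A : Set Ω} (f : Ω → ℝ) (h : P A ≠ 0) :
    ∫ ω in A, f ω ∂P = condMeanOn P A f * (P A).toReal := by
  rw [condMeanOn, div_mul_cancel₀]
  exact meas_toReal_ne_zero h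

lemma meas_toReal_pos {A : Set Ω} (h : P A ≠ 0) : 0 < (P A).toReal :=
  ENNReal.toReal_pos h (measure_ne_top P A)

lemma condMeanOn_congr_set {A B : Set Ω} (h : A =ᵐ[P] B) (f : Ω → ℝ) :
    condMeanOn P A f = condMeanOn P B f := by
  unfold condMeanOn
  rw [setIntegral_congr_set h, measure_congr h]

lemma condMeanOn_union {A B : Set Ω} (f : Ω → ℝ) (hB : MeasurableSet B) (hdisj : Disjoint A B)
    (hPA : P A ≠ 0) (hPB : P B ≠ 0) (hfA : IntegrableOn f A P) (hfB : IntegrableOn f B P)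
    (heq : condMeanOn P A f = condMeanOn P B f) :
    condMeanOn P (A ∪ B) f = condMeanOn P A f := by
  have hPAB : P (A ∪ B) = P A + P B := measure_union hdisj hB
  have ha := meas_toReal_pos (P := P) hPA
  have hb := meas_toReal_pos (P := P) hPB
  rw [condMeanOn, setIntegral_union hdisj hB hfA hfB,
    setIntegral_eq_condMeanOn_mul f hPA, setIntegral_eq_condMeanOn_mul f hPB, ← heq, hPAB,
    ENNReal.toReal_add (measure_ne_top P A) (measure_ne_top P B), ← mul_add, mul_div_assoc,
    div_self (by positivity), mul_one]

lemma condMeanOn_sub {A : Set Ω} (f g : Ω → ℝ) (hf : IntegrableOn f A P)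
    (hg : IntegrableOn g A P) :
    condMeanOn P A (fun ω => f ω - g ω) = condMeanOn P A f - condMeanOn P A g := by
  unfold condMeanOn
  rw [integral_sub hf hg, sub_div]

lemma psiA_eqOn (X : Ω → 𝓧) (Z : Ω → ℝ) (a : ℝ) (f : Ω → ℝ) (x : 𝓧) :
    Set.EqOn (psiA P X Z a f)
      (fun ω => {ω' | Z ω' = a}.indicator
          (fun ω' => (condProbOn P {ω' | Z ω' = a} {ω' | X ω' = x})⁻¹
            * (f ω' - condMeanOn P {ω' | Z ω' = a ∧ X ω' = x} f)) ω
        + condMeanOn P {ω' | Z ω' = a ∧ X ω' = x} f)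
      {ω | X ω = x} := by
  intro ω hω
  have hx : X ω = x := hω
  simp only [psiA, hx, Set.indicator_apply, Set.mem_setOf_eq]
  by_cases h : Z ω = a <;> simp [h, div_eq_inv_mul]

lemma integrableOn_psiA (X : Ω → 𝓧) (Z : Ω → ℝ) (a : ℝ) (f : Ω → ℝ) (x : 𝓧)
    (hZa : MeasurableSet {ω | Z ω = a}) (hD : MeasurableSet {ω : Ω | X ω = x})
    (hf : IntegrableOn f ({ω' | Z ω' = a} ∩ {ω | X ω = x}) P) :
    IntegrableOn (psiA P X Z a f) {ω | X ω = x} P := by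
  set m := condMeanOn P {ω' | Z ω' = a ∧ X ω' = x} f with hm
  set c := condProbOn P {ω' | Z ω' = a} {ω' | X ω' = x} with hc
  have hnice : IntegrableOn
      (fun ω => {ω' | Z ω' = a}.indicator (fun ω' => c⁻¹ * (f ω' - m)) ω + m)
      {ω | X ω = x} P := by
    refine Integrable.add ?_ (integrableOn_const (measure_ne_top _ _))
    have : IntegrableOn (fun ω' => c⁻¹ * (f ω' - m)) ({ω' | Z ω' = a} ∩ {ω | X ω = x}) P :=
      ((hf.sub (integrableOn_const (measure_ne_top _ _))).const_mul _)
    rw [IntegrableOn, ← Measure.restrict_restrict hZa] at this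
    exact (integrable_indicator_iff hZa).2 this
  exact hnice.congr_fun (psiA_eqOn X Z a f x).symm hD

lemma setIntegral_psiA (X : Ω → 𝓧) (Z : Ω → ℝ) (a : ℝ) (f : Ω → ℝ) (x : 𝓧)
    (hZa : MeasurableSet {ω | Z ω = a}) (hD : MeasurableSet {ω : Ω | X ω = x})
    (hf : IntegrableOn f ({ω' | Z ω' = a} ∩ {ω | X ω = x}) P)
    (hCa : P {ω' | Z ω' = a ∧ X ω' = x} ≠ 0) :
    ∫ ω in {ω | X ω = x}, psiA P X Z a f ω ∂P
      = condMeanOn P {ω' | Z ω' = a ∧ X ω' = x} f * (P {ω | X ω = x}).toReal := by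
  set m := condMeanOn P {ω' | Z ω' = a ∧ X ω' = x} f with hm
  set c := condProbOn P {ω' | Z ω' = a} {ω' | X ω' = x} with hc
  have hset : {ω : Ω | X ω = x} ∩ {ω' | Z ω' = a} = {ω' | Z ω' = a ∧ X ω' = x} := by
    ext ω; simp [Set.mem_setOf_eq, and_comm]
  rw [setIntegral_congr_fun hD (psiA_eqOn X Z a f x)]
  have hind : IntegrableOn
      (fun ω => {ω' | Z ω' = a}.indicator (fun ω' => c⁻¹ * (f ω' - m)) ω) {ω | X ω = x} P := by
    have : IntegrableOn (fun ω' => c⁻¹ * (f ω' - m)) ({ω' | Z ω' = a} ∩ {ω | X ω = x}) P :=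
      ((hf.sub (integrableOn_const (measure_ne_top _ _))).const_mul _)
    rw [IntegrableOn, ← Measure.restrict_restrict hZa] at this
    exact (integrable_indicator_iff hZa).2 this
  rw [integral_add hind (integrableOn_const (measure_ne_top _ _))]
  rw [setIntegral_indicator hZa, hset, setIntegral_const, smul_eq_mul, measureReal_def]
  have hfint : IntegrableOn f {ω' | Z ω' = a ∧ X ω' = x} P := by rwa [← hset, Set.inter_comm]
  have hintval : ∫ ω in {ω' | Z ω' = a ∧ X ω' = x}, (c⁻¹ * (f ω - m)) ∂P = 0 := by
    rw [integral_const_mul, integral_sub hfint (integrableOn_const (measure_ne_top _ _)),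
      setIntegral_const, smul_eq_mul, measureReal_def, setIntegral_eq_condMeanOn_mul f hCa, ← hm]
    ring
  rw [hintval, ← hm]
  ring

lemma condMeanOn_psiA (X : Ω → 𝓧) (Z : Ω → ℝ) (a : ℝ) (f : Ω → ℝ) (x : 𝓧)
    (hZa : MeasurableSet {ω | Z ω = a}) (hD : MeasurableSet {ω : Ω | X ω = x})
    (hf : IntegrableOn f ({ω' | Z ω' = a} ∩ {ω | X ω = x}) P)
    (hCa : P {ω' | Z ω' = a ∧ X ω' = x} ≠ 0) (hPD : P {ω : Ω | X ω = x} ≠ 0) :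
    condMeanOn P {ω | X ω = x} (psiA P X Z a f)
      = condMeanOn P {ω' | Z ω' = a ∧ X ω' = x} f := by
  rw [condMeanOn, setIntegral_psiA X Z a f x hZa hD hf hCa,
    mul_div_cancel_right₀ _ (meas_toReal_ne_zero hPD)]

end Aux

section Transfer
variable {Ω : Type*} [MeasurableSpace Ω] {P : Measure Ω} [IsProbabilityMeasure P]

lemma ignor_transfer {𝓧 : Type*} [MeasurableSpace 𝓧] (X : Ω → 𝓧) (Y1 Y0 S1 S0 Z : Ω → ℝ)
    (hY1m : Measurable Y1) (hY0m : Measurable Y0) (hS1m : Measurable S1) (hS0m : Measurable S0)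
    (z : ℝ) (x : 𝓧)
    (hA2 : ∀ A : Set (ℝ × ℝ × ℝ × ℝ), MeasurableSet A →
      P ({ω | (Y1 ω, Y0 ω, S1 ω, S0 ω) ∈ A} ∩ {ω | Z ω = z} ∩ {ω | X ω = x}) * P {ω | X ω = x}
        = P ({ω | (Y1 ω, Y0 ω, S1 ω, S0 ω) ∈ A} ∩ {ω | X ω = x})
            * P ({ω | Z ω = z} ∩ {ω | X ω = x}))
    (g : ℝ × ℝ × ℝ × ℝ → ℝ) (hg : Measurable g)
    (hC : P ({ω | Z ω = z} ∩ {ω | X ω = x}) ≠ 0) (hD : P {ω : Ω | X ω = x} ≠ 0)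
    (hint : IntegrableOn (fun ω => g (Y1 ω, Y0 ω, S1 ω, S0 ω))
      ({ω | Z ω = z} ∩ {ω | X ω = x}) P) :
    IntegrableOn (fun ω => g (Y1 ω, Y0 ω, S1 ω, S0 ω)) {ω | X ω = x} P ∧
    (∫ ω in {ω | Z ω = z} ∩ {ω | X ω = x}, g (Y1 ω, Y0 ω, S1 ω, S0 ω) ∂P)
        * (P {ω : Ω | X ω = x}).toReal
      = (∫ ω in {ω : Ω | X ω = x}, g (Y1 ω, Y0 ω, S1 ω, S0 ω) ∂P)
          * (P ({ω | Z ω = z} ∩ {ω | X ω = x})).toReal := by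
  set V : Ω → ℝ × ℝ × ℝ × ℝ := fun ω => (Y1 ω, Y0 ω, S1 ω, S0 ω) with hV
  have hVm : Measurable V := hY1m.prodMk (hY0m.prodMk (hS1m.prodMk hS0m))
  set C := {ω | Z ω = z} ∩ {ω : Ω | X ω = x} with hCdef
  set D := {ω : Ω | X ω = x} with hDdef
  have hmeq : (P D) • ((P.restrict C).map V) = (P C) • ((P.restrict D).map V) := by
    ext A hA
    simp only [Measure.smul_apply, Measure.map_apply hVm hA, smul_eq_mul,
      Measure.restrict_apply (hVm hA)]
    have h1 : V ⁻¹' A ∩ C = {ω | V ω ∈ A} ∩ {ω | Z ω = z} ∩ D := by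
      rw [Set.inter_assoc]; rfl
    rw [h1, mul_comm (P D), mul_comm (P C)]
    exact hA2 A hA
  have hmapC : Integrable g ((P.restrict C).map V) :=
    (integrable_map_measure hg.aestronglyMeasurable hVm.aemeasurable).2 hint
  have h1 : Integrable g ((P D) • ((P.restrict C).map V)) :=
    (integrable_smul_measure hD (measure_ne_top P D)).2 hmapC
  rw [hmeq] at h1
  have h2 : Integrable g ((P.restrict D).map V) :=
    (integrable_smul_measure hC (measure_ne_top P C)).1 h1
  have hintD : IntegrableOn (fun ω => g (V ω)) D P :=
    (integrable_map_measure hg.aestronglyMeasurable hVm.aemeasurable).1 h2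
  refine ⟨hintD, ?_⟩
  have hI : ∫ y, g y ∂((P D) • ((P.restrict C).map V))
      = ∫ y, g y ∂((P C) • ((P.restrict D).map V)) := by rw [hmeq]
  rw [integral_smul_measure, integral_smul_measure,
    integral_map hVm.aemeasurable hg.aestronglyMeasurable,
    integral_map hVm.aemeasurable hg.aestronglyMeasurable, smul_eq_mul, smul_eq_mul] at hI
  rw [mul_comm _ ((P D).toReal), mul_comm _ ((P C).toReal)]
  exact hI

end Transfer

section Binary
variable {Ω : Type*} [MeasurableSpace Ω] {P : Measure Ω} [IsProbabilityMeasure P]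
variable {S Y : Ω → ℝ}

lemma binary_compl (hS01 : ∀ ω, S ω = 0 ∨ S ω = 1) :
    {ω | S ω = 1}ᶜ = {ω | S ω = 0} := by
  ext ω
  rcases hS01 ω with h | h <;> simp [h]

lemma mul_binary_eq_indicator (hS01 : ∀ ω, S ω = 0 ∨ S ω = 1) :
    (fun ω => Y ω * S ω) = {ω | S ω = 1}.indicator Y := by
  funext ω
  rcases hS01 ω with h | h <;> simp [Set.indicator_apply, h]

lemma mul_one_sub_binary_eq_indicator (hS01 : ∀ ω, S ω = 0 ∨ S ω = 1) :
    (fun ω => Y ω * (1 - S ω)) = {ω | S ω = 1}ᶜ.indicator Y := by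
  funext ω
  rcases hS01 ω with h | h <;> simp [Set.indicator_apply, h]

lemma binary_eq_indicator (hS01 : ∀ ω, S ω = 0 ∨ S ω = 1) :
    S = {ω | S ω = 1}.indicator (fun _ => (1 : ℝ)) := by
  funext ω
  rcases hS01 ω with h | h <;> simp [Set.indicator_apply, h]

lemma setIntegral_binary (hS01 : ∀ ω, S ω = 0 ∨ S ω = 1) (hSm : Measurable S) (A : Set Ω) :
    ∫ ω in A, S ω ∂P = (P (A ∩ {ω | S ω = 1})).toReal := by
  have hs1 : MeasurableSet {ω | S ω = 1} := hSm (measurableSet_singleton 1)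
  conv_lhs => rw [show (fun ω => S ω) = S from rfl, binary_eq_indicator hS01]
  rw [setIntegral_indicator hs1, setIntegral_const, smul_eq_mul, mul_one, measureReal_def]

lemma integrable_binary (hS01 : ∀ ω, S ω = 0 ∨ S ω = 1) (hSm : Measurable S) :
    Integrable S P := by
  rw [binary_eq_indicator hS01]
  exact (integrable_const 1).indicator (hSm (measurableSet_singleton 1))

lemma setIntegral_one_sub_binary (hS01 : ∀ ω, S ω = 0 ∨ S ω = 1) (hSm : Measurable S)
    (A : Set Ω) (hA : MeasurableSet A) :
    ∫ ω in A, (1 - S ω) ∂P = (P A).toReal - (P (A ∩ {ω | S ω = 1})).toReal := by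
  rw [integral_sub (integrableOn_const (measure_ne_top P A) : IntegrableOn (fun _ => (1 : ℝ)) A P)
      (integrable_binary hS01 hSm).integrableOn,
    setIntegral_const, smul_eq_mul, mul_one, measureReal_def, setIntegral_binary hS01 hSm]

end Binary


lemma condMeanOn_congr_fun {Ω : Type*} [MeasurableSpace Ω] {P : Measure Ω}
    {A : Set Ω} (hA : MeasurableSet A) {f g : Ω → ℝ}
    (h : Set.EqOn f g A) : condMeanOn P A f = condMeanOn P A g := by
  unfold condMeanOn
  rw [setIntegral_congr_fun hA h]

lemma setIntegral_lincomb4 {Ω : Type*} [MeasurableSpace Ω] {P : Measure Ω}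
    {A : Set Ω} (c1 c2 c3 c4 : ℝ) {f1 f2 f3 f4 : Ω → ℝ}
    (h1 : IntegrableOn f1 A P) (h2 : IntegrableOn f2 A P) (h3 : IntegrableOn f3 A P)
    (h4 : IntegrableOn f4 A P) :
    ∫ ω in A, (c1 * f1 ω + (c2 * f2 ω + (c3 * f3 ω + c4 * f4 ω))) ∂P
      = c1 * (∫ ω in A, f1 ω ∂P) + (c2 * (∫ ω in A, f2 ω ∂P)
        + (c3 * (∫ ω in A, f3 ω ∂P) + c4 * (∫ ω in A, f4 ω ∂P))) := by
  have H34 : IntegrableOn (fun ω => c3 * f3 ω + c4 * f4 ω) A P :=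
    (h3.const_mul c3).add (h4.const_mul c4)
  have H234 : IntegrableOn (fun ω => c2 * f2 ω + (c3 * f3 ω + c4 * f4 ω)) A P :=
    (h2.const_mul c2).add H34
  rw [integral_add (h1.const_mul c1) H234, integral_add (h2.const_mul c2) H34,
    integral_add (h3.const_mul c3) (h4.const_mul c4),
    integral_const_mul, integral_const_mul, integral_const_mul, integral_const_mul]

lemma setIntegral_lincomb6 {Ω : Type*} [MeasurableSpace Ω] {P : Measure Ω}
    {A : Set Ω} (c1 c2 c3 c4 c5 c6 : ℝ) {f1 f2 f3 f4 f5 f6 : Ω → ℝ}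
    (h1 : IntegrableOn f1 A P) (h2 : IntegrableOn f2 A P) (h3 : IntegrableOn f3 A P)
    (h4 : IntegrableOn f4 A P) (h5 : IntegrableOn f5 A P) (h6 : IntegrableOn f6 A P) :
    ∫ ω in A, (c1 * f1 ω + (c2 * f2 ω + (c3 * f3 ω
        + (c4 * f4 ω + (c5 * f5 ω + c6 * f6 ω))))) ∂P
      = c1 * (∫ ω in A, f1 ω ∂P) + (c2 * (∫ ω in A, f2 ω ∂P)
        + (c3 * (∫ ω in A, f3 ω ∂P) + (c4 * (∫ ω in A, f4 ω ∂P)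
          + (c5 * (∫ ω in A, f5 ω ∂P) + c6 * (∫ ω in A, f6 ω ∂P))))) := by
  have H56 : IntegrableOn (fun ω => c5 * f5 ω + c6 * f6 ω) A P :=
    (h5.const_mul c5).add (h6.const_mul c6)
  have H456 : IntegrableOn (fun ω => c4 * f4 ω + (c5 * f5 ω + c6 * f6 ω)) A P :=
    (h4.const_mul c4).add H56
  have H3456 : IntegrableOn (fun ω => c3 * f3 ω + (c4 * f4 ω + (c5 * f5 ω + c6 * f6 ω))) A P :=
    (h3.const_mul c3).add H456
  have H23456 : IntegrableOn
      (fun ω => c2 * f2 ω + (c3 * f3 ω + (c4 * f4 ω + (c5 * f5 ω + c6 * f6 ω)))) A P :=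
    (h2.const_mul c2).add H3456
  rw [integral_add (h1.const_mul c1) H23456, integral_add (h2.const_mul c2) H3456,
    integral_add (h3.const_mul c3) H456, integral_add (h4.const_mul c4) H56,
    integral_add (h5.const_mul c5) (h6.const_mul c6),
    integral_const_mul, integral_const_mul, integral_const_mul, integral_const_mul,
    integral_const_mul, integral_const_mul]

lemma strat_mean_transfer {Ω : Type*} [MeasurableSpace Ω] {P : Measure Ω}
    [IsProbabilityMeasure P] {𝓧 : Type*} [MeasurableSpace 𝓧]
    (X : Ω → 𝓧) (Y1 Y0 S1 S0 Z Y : Ω → ℝ)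
    (hY1m : Measurable Y1) (hY0m : Measurable Y0) (hS1m : Measurable S1) (hS0m : Measurable S0)
    (pY pS : ℝ × ℝ × ℝ × ℝ → ℝ) (hpYm : Measurable pY) (hpSm : Measurable pS)
    (Yp Sp : Ω → ℝ)
    (hpY : ∀ ω, pY (Y1 ω, Y0 ω, S1 ω, S0 ω) = Yp ω)
    (hpS : ∀ ω, pS (Y1 ω, Y0 ω, S1 ω, S0 ω) = Sp ω)
    (z v : ℝ) (x : 𝓧) (M : Set Ω) (hMm : MeasurableSet M)
    (hA2' : ∀ A : Set (ℝ × ℝ × ℝ × ℝ), MeasurableSet A →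
      P ({ω | (Y1 ω, Y0 ω, S1 ω, S0 ω) ∈ A} ∩ {ω | Z ω = z} ∩ {ω | X ω = x}) * P {ω | X ω = x}
        = P ({ω | (Y1 ω, Y0 ω, S1 ω, S0 ω) ∈ A} ∩ {ω | X ω = x})
            * P ({ω | Z ω = z} ∩ {ω | X ω = x}))
    (hsetM : {ω | Sp ω = v} ∩ ({ω | Z ω = z} ∩ {ω | X ω = x}) = M)
    (hYeqOn : Set.EqOn Yp Y M)
    (hMne : P M ≠ 0)
    (hYM : IntegrableOn Y M P)
    (hCne : P ({ω | Z ω = z} ∩ {ω | X ω = x}) ≠ 0) (hPD : P {ω : Ω | X ω = x} ≠ 0) :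
    P ({ω | Sp ω = v} ∩ {ω | X ω = x}) ≠ 0 ∧
    IntegrableOn Yp ({ω | Sp ω = v} ∩ {ω | X ω = x}) P ∧
    condMeanOn P ({ω | Sp ω = v} ∩ {ω | X ω = x}) Yp = condMeanOn P M Y := by
  set V : Ω → ℝ × ℝ × ℝ × ℝ := fun ω => (Y1 ω, Y0 ω, S1 ω, S0 ω) with hVdef
  have hVm : Measurable V := hY1m.prodMk (hY0m.prodMk (hS1m.prodMk hS0m))
  have hAm : MeasurableSet (pS ⁻¹' {v}) := hpSm (measurableSet_singleton v)
  have hSv : {ω | V ω ∈ pS ⁻¹' {v}} = {ω | Sp ω = v} := by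
    ext ω; simp [hVdef, hpS ω]
  have hSpvm : MeasurableSet {ω | Sp ω = v} := by
    rw [← hSv]; exact hVm hAm
  have hprob := hA2' (pS ⁻¹' {v}) hAm
  rw [show {ω | (Y1 ω, Y0 ω, S1 ω, S0 ω) ∈ pS ⁻¹' {v}} = {ω | Sp ω = v} from hSv] at hprob
  set g : ℝ × ℝ × ℝ × ℝ → ℝ := (pS ⁻¹' {v}).indicator pY with hgdef
  have hgm : Measurable g := hpYm.indicator hAm
  have hgV : (fun ω => g (Y1 ω, Y0 ω, S1 ω, S0 ω)) = {ω | Sp ω = v}.indicator Yp := by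
    funext ω
    by_cases h : Sp ω = v <;>
      simp [hgdef, Set.indicator_apply, hpS ω, hpY ω, h]
  have hYpM : IntegrableOn Yp M P := hYM.congr_fun hYeqOn.symm hMm
  have hinterM : ({ω | Z ω = z} ∩ {ω : Ω | X ω = x}) ∩ {ω | Sp ω = v} = M := by
    rw [← hsetM]; exact Set.inter_comm _ _
  have hintC : IntegrableOn (fun ω => g (Y1 ω, Y0 ω, S1 ω, S0 ω))
      ({ω | Z ω = z} ∩ {ω | X ω = x}) P := by
    rw [hgV]
    refine (integrable_indicator_iff hSpvm).2 ?_
    rw [IntegrableOn, Measure.restrict_restrict hSpvm, hsetM]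
    exact hYpM
  obtain ⟨hintD, htrans⟩ := ignor_transfer X Y1 Y0 S1 S0 Z hY1m hY0m hS1m hS0m z x hA2'
    g hgm hCne hPD hintC
  rw [hgV] at hintD htrans
  have hCint : ∫ ω in {ω | Z ω = z} ∩ {ω | X ω = x}, ({ω | Sp ω = v}.indicator Yp) ω ∂P
      = condMeanOn P M Y * (P M).toReal := by
    rw [setIntegral_indicator hSpvm, hinterM, setIntegral_congr_fun hMm hYeqOn,
      setIntegral_eq_condMeanOn_mul Y hMne]
  have hDint : ∫ ω in {ω : Ω | X ω = x}, ({ω | Sp ω = v}.indicator Yp) ω ∂P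
      = ∫ ω in {ω | Sp ω = v} ∩ {ω | X ω = x}, Yp ω ∂P := by
    rw [setIntegral_indicator hSpvm, Set.inter_comm]
  rw [hCint, hDint] at htrans
  have hprobM : P M * P {ω : Ω | X ω = x}
      = P ({ω | Sp ω = v} ∩ {ω | X ω = x}) * P ({ω | Z ω = z} ∩ {ω | X ω = x}) := by
    rw [← hprob, Set.inter_assoc, hsetM]
  have hBne : P ({ω | Sp ω = v} ∩ {ω | X ω = x}) ≠ 0 := by
    intro h0
    rw [h0, zero_mul] at hprobM
    exact (mul_ne_zero hMne hPD) hprobM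
  have hintB : IntegrableOn Yp ({ω | Sp ω = v} ∩ {ω | X ω = x}) P := by
    have h1 := (integrable_indicator_iff hSpvm).1 hintD
    rwa [IntegrableOn, Measure.restrict_restrict hSpvm] at h1
  refine ⟨hBne, hintB, ?_⟩
  have hcR : (P ({ω | Z ω = z} ∩ {ω : Ω | X ω = x})).toReal ≠ 0 := meas_toReal_ne_zero hCne
  have hprobR : (P M).toReal * (P {ω : Ω | X ω = x}).toReal
      = (P ({ω | Sp ω = v} ∩ {ω | X ω = x})).toReal
          * (P ({ω | Z ω = z} ∩ {ω | X ω = x})).toReal := by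
    rw [← ENNReal.toReal_mul, ← ENNReal.toReal_mul, hprobM]
  have hI : ∫ ω in {ω | Sp ω = v} ∩ {ω | X ω = x}, Yp ω ∂P
      = condMeanOn P M Y * (P ({ω | Sp ω = v} ∩ {ω | X ω = x})).toReal := by
    apply mul_right_cancel₀ hcR
    rw [← htrans]
    calc condMeanOn P M Y * (P M).toReal * (P {ω : Ω | X ω = x}).toReal
        = condMeanOn P M Y * ((P M).toReal * (P {ω : Ω | X ω = x}).toReal) := by ring
      _ = condMeanOn P M Y * ((P ({ω | Sp ω = v} ∩ {ω | X ω = x})).toReal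
            * (P ({ω | Z ω = z} ∩ {ω | X ω = x})).toReal) := by rw [hprobR]
      _ = _ := by ring
  rw [condMeanOn, hI, mul_div_cancel_right₀ _ (meas_toReal_ne_zero hBne)]

/-- EIF identification of the CPCEs: the denominator scores identify the principal
scores, and each CPCE is identified by the efficient-influence-function ratio. -/
theorem cpce_eif_identification
    {Ω : Type*} [MeasurableSpace Ω] (P : Measure Ω) [IsProbabilityMeasure P]
    {d : ℕ} (X : Ω → Fin d → ℝ) (Y Z S Y1 Y0 S1 S0 : Ω → ℝ)
    (hXm : Measurable X) (hYm : Measurable Y) (hZm : Measurable Z) (hSm : Measurable S)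
    (hY1m : Measurable Y1) (hY0m : Measurable Y0) (hS1m : Measurable S1) (hS0m : Measurable S0)
    (hZ01 : ∀ ω, Z ω = 0 ∨ Z ω = 1) (hS01 : ∀ ω, S ω = 0 ∨ S ω = 1)
    (hS1b : ∀ ω, S1 ω = 0 ∨ S1 ω = 1) (hS0b : ∀ ω, S0 ω = 0 ∨ S0 ω = 1)
    -- Assumption 1 (consistency)
    (hA1 : ∀ ω, Y ω = Y1 ω * Z ω + Y0 ω * (1 - Z ω) ∧ S ω = S1 ω * Z ω + S0 ω * (1 - Z ω))
    -- Assumption 2 (treatment ignorability): (Y(1),Y(0),S(1),S(0)) ⟂ Z | X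
    (hA2 : ∀ (x : Fin d → ℝ) (A : Set (ℝ × ℝ × ℝ × ℝ)), MeasurableSet A → ∀ z : ℝ,
      P ({ω | (Y1 ω, Y0 ω, S1 ω, S0 ω) ∈ A} ∩ {ω | Z ω = z} ∩ {ω | X ω = x})
          * P {ω | X ω = x}
        = P ({ω | (Y1 ω, Y0 ω, S1 ω, S0 ω) ∈ A} ∩ {ω | X ω = x})
            * P ({ω | Z ω = z} ∩ {ω | X ω = x}))
    -- Assumption 3 (monotonicity)
    (hA3 : ∀ᵐ ω ∂P, S0 ω ≤ S1 ω)
    -- Assumption 4 (principal ignorability)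
    (hA4 : ∀ x : Fin d → ℝ, P {ω | X ω = x} ≠ 0 →
      condMeanOn P {ω | S1 ω = 1 ∧ S0 ω = 1 ∧ X ω = x} Y1
          = condMeanOn P {ω | S1 ω = 1 ∧ S0 ω = 0 ∧ X ω = x} Y1 ∧
        condMeanOn P {ω | S1 ω = 0 ∧ S0 ω = 0 ∧ X ω = x} Y0
          = condMeanOn P {ω | S1 ω = 1 ∧ S0 ω = 0 ∧ X ω = x} Y0)
    (hYi : Integrable Y P) :
    ∀ x : Fin d → ℝ,
      P {ω | X ω = x} ≠ 0 →
      (∀ z : ℝ, z = 0 ∨ z = 1 → P {ω | Z ω = z ∧ X ω = x} ≠ 0) →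
      (∀ z s : ℝ, (z = 0 ∨ z = 1) → (s = 0 ∨ s = 1) →
        P {ω | Z ω = z ∧ S ω = s ∧ X ω = x} ≠ 0) →
      (∀ a b : ℝ, ((a = 1 ∧ b = 1) ∨ (a = 1 ∧ b = 0) ∨ (a = 0 ∧ b = 0)) →
        P {ω | S1 ω = a ∧ S0 ω = b ∧ X ω = x} ≠ 0) →
      0 < piX P X Z x → piX P X Z x < 1 →
      0 < pZs P X Z S 0 x → pZs P X Z S 1 x < 1 →
      pZs P X Z S 0 x < pZs P X Z S 1 x →
      (condMeanOn P {ω | X ω = x} (gA00 P X Z S) = 1 - pZs P X Z S 1 x) ∧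
      (condMeanOn P {ω | X ω = x} (gA10 P X Z S)
          = pZs P X Z S 1 x - pZs P X Z S 0 x) ∧
      (condMeanOn P {ω | X ω = x} (gA11 P X Z S) = pZs P X Z S 0 x) ∧
      (tauPO P X S1 S0 Y1 Y0 0 0 x
          = condMeanOn P {ω | X ω = x}
              (fun ω =>
                (phiA1_00 P X Z S Y ω - phiA0_00 P X Z S Y ω)
                  / condMeanOn P {ω' | X ω' = X ω} (gA00 P X Z S))) ∧
      (tauPO P X S1 S0 Y1 Y0 1 0 x
          = condMeanOn P {ω | X ω = x}
              (fun ω =>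
                (phiA1_10 P X Z S Y ω - phiA0_10 P X Z S Y ω)
                  / condMeanOn P {ω' | X ω' = X ω} (gA10 P X Z S))) ∧
      (tauPO P X S1 S0 Y1 Y0 1 1 x
          = condMeanOn P {ω | X ω = x}
              (fun ω =>
                (phiA1_11 P X Z S Y ω - phiA0_11 P X Z S Y ω)
                  / condMeanOn P {ω' | X ω' = X ω} (gA11 P X Z S))) := by
  intro x hPD hPC hPZS hPU hpi0 hpi1 hp0pos hp1lt hp0lt
  -- measurable sets
  have hDm : MeasurableSet {ω | X ω = x} := hXm (measurableSet_singleton x)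
  have hZsetm : ∀ z : ℝ, MeasurableSet {ω | Z ω = z} := fun z => hZm (measurableSet_singleton z)
  have hS1setm : MeasurableSet {ω | S ω = 1} := hSm (measurableSet_singleton 1)
  have hCm : ∀ z : ℝ, MeasurableSet {ω | Z ω = z ∧ X ω = x} :=
    fun z => (hZsetm z).inter hDm
  have hdR : (P {ω | X ω = x}).toReal ≠ 0 := meas_toReal_ne_zero hPD
  -- global integrabilities
  have hYS_int : Integrable (fun ω => Y ω * S ω) P := by
    rw [mul_binary_eq_indicator hS01]; exact hYi.indicator hS1setm
  have hY1mS_int : Integrable (fun ω => Y ω * (1 - S ω)) P := by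
    rw [mul_one_sub_binary_eq_indicator hS01]; exact hYi.indicator hS1setm.compl
  have hS_int : Integrable S P := integrable_binary hS01 hSm
  have h1mS_int : Integrable (fun ω => 1 - S ω) P := (integrable_const 1).sub hS_int
  -- base conditional means given (Z = z, X = x)
  have hbase : ∀ z : ℝ, (z = 0 ∨ z = 1) →
      condMeanOn P {ω | Z ω = z ∧ X ω = x} S = pZs P X Z S z x ∧
      condMeanOn P {ω | Z ω = z ∧ X ω = x} (fun ω => 1 - S ω) = 1 - pZs P X Z S z x ∧
      condMeanOn P {ω | Z ω = z ∧ X ω = x} (fun ω => Y ω * S ω)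
        = muZS P X Z S Y z 1 x * pZs P X Z S z x ∧
      condMeanOn P {ω | Z ω = z ∧ X ω = x} (fun ω => Y ω * (1 - S ω))
        = muZS P X Z S Y z 0 x * (1 - pZs P X Z S z x) := by
    intro z hz
    have hCne : P {ω | Z ω = z ∧ X ω = x} ≠ 0 := hPC z hz
    have hM1ne : P {ω | Z ω = z ∧ S ω = 1 ∧ X ω = x} ≠ 0 := hPZS z 1 hz (Or.inr rfl)
    have hM0ne : P {ω | Z ω = z ∧ S ω = 0 ∧ X ω = x} ≠ 0 := hPZS z 0 hz (Or.inl rfl)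
    have hset1 : {ω | Z ω = z ∧ X ω = x} ∩ {ω | S ω = 1}
        = {ω | Z ω = z ∧ S ω = 1 ∧ X ω = x} := by
      ext ω; simp only [Set.mem_inter_iff, Set.mem_setOf_eq]; tauto
    have hset1' : {ω | S ω = 1} ∩ {ω | Z ω = z ∧ X ω = x}
        = {ω | Z ω = z ∧ S ω = 1 ∧ X ω = x} := by
      rw [Set.inter_comm]; exact hset1
    have hset0 : {ω | Z ω = z ∧ X ω = x} ∩ {ω | S ω = 1}ᶜ
        = {ω | Z ω = z ∧ S ω = 0 ∧ X ω = x} := by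
      rw [binary_compl hS01]
      ext ω; simp only [Set.mem_inter_iff, Set.mem_setOf_eq]; tauto
    have hpz : pZs P X Z S z x
        = (P {ω | Z ω = z ∧ S ω = 1 ∧ X ω = x}).toReal
            / (P {ω | Z ω = z ∧ X ω = x}).toReal := by
      rw [pZs, condProbOn, hset1']
    have hsplit : (P {ω | Z ω = z ∧ S ω = 1 ∧ X ω = x}).toReal
        + (P {ω | Z ω = z ∧ S ω = 0 ∧ X ω = x}).toReal
        = (P {ω | Z ω = z ∧ X ω = x}).toReal := by
      have h := measure_inter_add_diff (μ := P) {ω | Z ω = z ∧ X ω = x} hS1setm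
      rw [Set.diff_eq, hset0, hset1] at h
      rw [← ENNReal.toReal_add (measure_ne_top P _) (measure_ne_top P _), h]
    have hcR : (P {ω | Z ω = z ∧ X ω = x}).toReal ≠ 0 := meas_toReal_ne_zero hCne
    refine ⟨?_, ?_, ?_, ?_⟩
    · rw [condMeanOn, setIntegral_binary hS01 hSm, hset1, hpz]
    · rw [condMeanOn, setIntegral_one_sub_binary hS01 hSm _ (hCm z), hset1, hpz, sub_div,
        div_self hcR]
    · rw [condMeanOn]
      conv_lhs =>
        rw [show (fun ω => Y ω * S ω) = {ω | S ω = 1}.indicator Y from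
          mul_binary_eq_indicator hS01]
      rw [setIntegral_indicator hS1setm, hset1,
        setIntegral_eq_condMeanOn_mul Y hM1ne, hpz, muZS, mul_div_assoc]
    · rw [condMeanOn]
      conv_lhs =>
        rw [show (fun ω => Y ω * (1 - S ω)) = {ω | S ω = 1}ᶜ.indicator Y from
          mul_one_sub_binary_eq_indicator hS01]
      rw [setIntegral_indicator hS1setm.compl, hset0,
        setIntegral_eq_condMeanOn_mul Y hM0ne, hpz, muZS, mul_div_assoc]
      congr 1
      field_simp
      linarith [hsplit]
  have hC1ne : P {ω | Z ω = 1 ∧ X ω = x} ≠ 0 := hPC 1 (Or.inr rfl)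
  have hC0ne : P {ω | Z ω = 0 ∧ X ω = x} ≠ 0 := hPC 0 (Or.inl rfl)
  -- psiA integrabilities and integrals over D
  have hinterInt : ∀ (g : Ω → ℝ) (z : ℝ), Integrable g P →
      IntegrableOn g ({ω' | Z ω' = z} ∩ {ω | X ω = x}) P := fun g z hg => hg.integrableOn
  have hψint : ∀ (a : ℝ) (f : Ω → ℝ), Integrable f P →
      IntegrableOn (psiA P X Z a f) {ω | X ω = x} P := fun a f hf =>
    integrableOn_psiA X Z a f x (hZsetm a) hDm hf.integrableOn
  have hψval : ∀ (a : ℝ) (f : Ω → ℝ), Integrable f P → P {ω | Z ω = a ∧ X ω = x} ≠ 0 →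
      ∫ ω in {ω | X ω = x}, psiA P X Z a f ω ∂P
        = condMeanOn P {ω' | Z ω' = a ∧ X ω' = x} f * (P {ω | X ω = x}).toReal :=
    fun a f hf hCa => setIntegral_psiA X Z a f x (hZsetm a) hDm hf.integrableOn hCa
  have hψmean : ∀ (a : ℝ) (f : Ω → ℝ), Integrable f P → P {ω | Z ω = a ∧ X ω = x} ≠ 0 →
      condMeanOn P {ω | X ω = x} (psiA P X Z a f)
        = condMeanOn P {ω' | Z ω' = a ∧ X ω' = x} f :=
    fun a f hf hCa => condMeanOn_psiA X Z a f x (hZsetm a) hDm hf.integrableOn hCa hPD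
  obtain ⟨hb1S, hb1mS, hb1YS, hb1YmS⟩ := hbase 1 (Or.inr rfl)
  obtain ⟨hb0S, hb0mS, hb0YS, hb0YmS⟩ := hbase 0 (Or.inl rfl)

  -- positivity facts
  have hp1pos : 0 < pZs P X Z S 1 x := lt_trans hp0pos hp0lt
  have hp1ne : pZs P X Z S 1 x ≠ 0 := ne_of_gt hp1pos
  have hp0ne : pZs P X Z S 0 x ≠ 0 := ne_of_gt hp0pos
  have h1mp1ne : 1 - pZs P X Z S 1 x ≠ 0 := by intro h; nlinarith
  have h1mp0ne : 1 - pZs P X Z S 0 x ≠ 0 := by intro h; nlinarith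
  have he10ne : pZs P X Z S 1 x - pZs P X Z S 0 x ≠ 0 := by intro h; nlinarith
  -- integral values of the psi scores over {X = x}
  have hI1YS : ∫ ω in {ω | X ω = x}, psiA P X Z 1 (fun ω' => Y ω' * S ω') ω ∂P
      = muZS P X Z S Y 1 1 x * pZs P X Z S 1 x * (P {ω | X ω = x}).toReal := by
    rw [hψval 1 _ hYS_int hC1ne, hb1YS]
  have hI0YS : ∫ ω in {ω | X ω = x}, psiA P X Z 0 (fun ω' => Y ω' * S ω') ω ∂P
      = muZS P X Z S Y 0 1 x * pZs P X Z S 0 x * (P {ω | X ω = x}).toReal := by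
    rw [hψval 0 _ hYS_int hC0ne, hb0YS]
  have hI1S : ∫ ω in {ω | X ω = x}, psiA P X Z 1 S ω ∂P
      = pZs P X Z S 1 x * (P {ω | X ω = x}).toReal := by
    rw [hψval 1 S hS_int hC1ne, hb1S]
  have hI0S : ∫ ω in {ω | X ω = x}, psiA P X Z 0 S ω ∂P
      = pZs P X Z S 0 x * (P {ω | X ω = x}).toReal := by
    rw [hψval 0 S hS_int hC0ne, hb0S]
  have hI1m : ∫ ω in {ω | X ω = x}, psiA P X Z 1 (fun ω' => 1 - S ω') ω ∂P
      = (1 - pZs P X Z S 1 x) * (P {ω | X ω = x}).toReal := by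
    rw [hψval 1 _ h1mS_int hC1ne, hb1mS]
  have hI0m : ∫ ω in {ω | X ω = x}, psiA P X Z 0 (fun ω' => 1 - S ω') ω ∂P
      = (1 - pZs P X Z S 0 x) * (P {ω | X ω = x}).toReal := by
    rw [hψval 0 _ h1mS_int hC0ne, hb0mS]
  have hI1Ym : ∫ ω in {ω | X ω = x}, psiA P X Z 1 (fun ω' => Y ω' * (1 - S ω')) ω ∂P
      = muZS P X Z S Y 1 0 x * (1 - pZs P X Z S 1 x) * (P {ω | X ω = x}).toReal := by
    rw [hψval 1 _ hY1mS_int hC1ne, hb1YmS]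
  have hI0Ym : ∫ ω in {ω | X ω = x}, psiA P X Z 0 (fun ω' => Y ω' * (1 - S ω')) ω ∂P
      = muZS P X Z S Y 0 0 x * (1 - pZs P X Z S 0 x) * (P {ω | X ω = x}).toReal := by
    rw [hψval 0 _ hY1mS_int hC0ne, hb0YmS]
  -- part (i) statements as haves
  have hg00 : condMeanOn P {ω | X ω = x} (gA00 P X Z S) = 1 - pZs P X Z S 1 x := by
    show condMeanOn P {ω | X ω = x} (psiA P X Z 1 fun ω' => 1 - S ω') = _
    rw [hψmean 1 _ h1mS_int hC1ne, hb1mS]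
  have hg10 : condMeanOn P {ω | X ω = x} (gA10 P X Z S)
      = pZs P X Z S 1 x - pZs P X Z S 0 x := by
    show condMeanOn P {ω | X ω = x} (fun ω => psiA P X Z 1 S ω - psiA P X Z 0 S ω) = _
    rw [condMeanOn_sub _ _ (hψint 1 S hS_int) (hψint 0 S hS_int), condMeanOn,
      condMeanOn, hI1S, hI0S,
      mul_div_cancel_right₀ _ hdR, mul_div_cancel_right₀ _ hdR]
  have hg11 : condMeanOn P {ω | X ω = x} (gA11 P X Z S) = pZs P X Z S 0 x := by
    show condMeanOn P {ω | X ω = x} (psiA P X Z 0 S) = _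
    rw [hψmean 0 S hS_int hC0ne, hb0S]
  -- consistency
  have hcons1 : ∀ ω : Ω, Z ω = 1 → Y ω = Y1 ω ∧ S ω = S1 ω := by
    intro ω hz
    obtain ⟨hY, hS⟩ := hA1 ω
    rw [hz] at hY hS
    exact ⟨by rw [hY]; ring, by rw [hS]; ring⟩
  have hcons0 : ∀ ω : Ω, Z ω = 0 → Y ω = Y0 ω ∧ S ω = S0 ω := by
    intro ω hz
    obtain ⟨hY, hS⟩ := hA1 ω
    rw [hz] at hY hS
    exact ⟨by rw [hY]; ring, by rw [hS]; ring⟩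
  -- measurable strata sets
  have hS1vm : ∀ v : ℝ, MeasurableSet {ω | S1 ω = v} :=
    fun v => hS1m (measurableSet_singleton v)
  have hS0vm : ∀ v : ℝ, MeasurableSet {ω | S0 ω = v} :=
    fun v => hS0m (measurableSet_singleton v)
  have hSvm : ∀ v : ℝ, MeasurableSet {ω | S ω = v} :=
    fun v => hSm (measurableSet_singleton v)
  have hA11m : MeasurableSet {ω | S1 ω = 1 ∧ S0 ω = 1 ∧ X ω = x} :=
    (hS1vm 1).inter ((hS0vm 1).inter hDm)
  have hA10m : MeasurableSet {ω | S1 ω = 1 ∧ S0 ω = 0 ∧ X ω = x} :=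
    (hS1vm 1).inter ((hS0vm 0).inter hDm)
  have hA00m : MeasurableSet {ω | S1 ω = 0 ∧ S0 ω = 0 ∧ X ω = x} :=
    (hS1vm 0).inter ((hS0vm 0).inter hDm)
  have hM11m : MeasurableSet {ω | Z ω = 1 ∧ S ω = 1 ∧ X ω = x} :=
    (hZsetm 1).inter ((hSvm 1).inter hDm)
  have hM10m : MeasurableSet {ω | Z ω = 1 ∧ S ω = 0 ∧ X ω = x} :=
    (hZsetm 1).inter ((hSvm 0).inter hDm)
  have hM01m : MeasurableSet {ω | Z ω = 0 ∧ S ω = 1 ∧ X ω = x} :=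
    (hZsetm 0).inter ((hSvm 1).inter hDm)
  have hM00m : MeasurableSet {ω | Z ω = 0 ∧ S ω = 0 ∧ X ω = x} :=
    (hZsetm 0).inter ((hSvm 0).inter hDm)
  -- transfers
  have hsetM11 : {ω | S1 ω = 1} ∩ ({ω | Z ω = 1} ∩ {ω | X ω = x})
      = {ω | Z ω = 1 ∧ S ω = 1 ∧ X ω = x} := by
    ext ω
    simp only [Set.mem_inter_iff, Set.mem_setOf_eq]
    constructor
    · rintro ⟨hs1, hz, hx⟩
      exact ⟨hz, by rw [(hcons1 ω hz).2]; exact hs1, hx⟩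
    · rintro ⟨hz, hs, hx⟩
      exact ⟨by rw [← (hcons1 ω hz).2]; exact hs, hz, hx⟩
  have hsetM10 : {ω | S1 ω = 0} ∩ ({ω | Z ω = 1} ∩ {ω | X ω = x})
      = {ω | Z ω = 1 ∧ S ω = 0 ∧ X ω = x} := by
    ext ω
    simp only [Set.mem_inter_iff, Set.mem_setOf_eq]
    constructor
    · rintro ⟨hs1, hz, hx⟩
      exact ⟨hz, by rw [(hcons1 ω hz).2]; exact hs1, hx⟩
    · rintro ⟨hz, hs, hx⟩
      exact ⟨by rw [← (hcons1 ω hz).2]; exact hs, hz, hx⟩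
  have hsetM01 : {ω | S0 ω = 1} ∩ ({ω | Z ω = 0} ∩ {ω | X ω = x})
      = {ω | Z ω = 0 ∧ S ω = 1 ∧ X ω = x} := by
    ext ω
    simp only [Set.mem_inter_iff, Set.mem_setOf_eq]
    constructor
    · rintro ⟨hs1, hz, hx⟩
      exact ⟨hz, by rw [(hcons0 ω hz).2]; exact hs1, hx⟩
    · rintro ⟨hz, hs, hx⟩
      exact ⟨by rw [← (hcons0 ω hz).2]; exact hs, hz, hx⟩
  have hsetM00 : {ω | S0 ω = 0} ∩ ({ω | Z ω = 0} ∩ {ω | X ω = x})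
      = {ω | Z ω = 0 ∧ S ω = 0 ∧ X ω = x} := by
    ext ω
    simp only [Set.mem_inter_iff, Set.mem_setOf_eq]
    constructor
    · rintro ⟨hs1, hz, hx⟩
      exact ⟨hz, by rw [(hcons0 ω hz).2]; exact hs1, hx⟩
    · rintro ⟨hz, hs, hx⟩
      exact ⟨by rw [← (hcons0 ω hz).2]; exact hs, hz, hx⟩
  obtain ⟨hB1ne, hB1int, hB1mean⟩ :=
    strat_mean_transfer (P := P) X Y1 Y0 S1 S0 Z Y hY1m hY0m hS1m hS0m
      (fun w => w.1) (fun w => w.2.2.1) measurable_fst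
      (measurable_fst.comp (measurable_snd.comp measurable_snd)) Y1 S1
      (fun ω => rfl) (fun ω => rfl) 1 1 x {ω | Z ω = 1 ∧ S ω = 1 ∧ X ω = x} hM11m
      (fun A hA => hA2 x A hA 1) hsetM11 (fun ω hω => ((hcons1 ω hω.1).1).symm)
      (hPZS 1 1 (Or.inr rfl) (Or.inr rfl)) hYi.integrableOn hC1ne hPD
  obtain ⟨hB2ne, hB2int, hB2mean⟩ :=
    strat_mean_transfer (P := P) X Y1 Y0 S1 S0 Z Y hY1m hY0m hS1m hS0m
      (fun w => w.1) (fun w => w.2.2.1) measurable_fst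
      (measurable_fst.comp (measurable_snd.comp measurable_snd)) Y1 S1
      (fun ω => rfl) (fun ω => rfl) 1 0 x {ω | Z ω = 1 ∧ S ω = 0 ∧ X ω = x} hM10m
      (fun A hA => hA2 x A hA 1) hsetM10 (fun ω hω => ((hcons1 ω hω.1).1).symm)
      (hPZS 1 0 (Or.inr rfl) (Or.inl rfl)) hYi.integrableOn hC1ne hPD
  obtain ⟨hB3ne, hB3int, hB3mean⟩ :=
    strat_mean_transfer (P := P) X Y1 Y0 S1 S0 Z Y hY1m hY0m hS1m hS0m
      (fun w => w.2.1) (fun w => w.2.2.2) (measurable_fst.comp measurable_snd)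
      (measurable_snd.comp (measurable_snd.comp measurable_snd)) Y0 S0
      (fun ω => rfl) (fun ω => rfl) 0 1 x {ω | Z ω = 0 ∧ S ω = 1 ∧ X ω = x} hM01m
      (fun A hA => hA2 x A hA 0) hsetM01 (fun ω hω => ((hcons0 ω hω.1).1).symm)
      (hPZS 0 1 (Or.inl rfl) (Or.inr rfl)) hYi.integrableOn hC0ne hPD
  obtain ⟨hB4ne, hB4int, hB4mean⟩ :=
    strat_mean_transfer (P := P) X Y1 Y0 S1 S0 Z Y hY1m hY0m hS1m hS0m
      (fun w => w.2.1) (fun w => w.2.2.2) (measurable_fst.comp measurable_snd)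
      (measurable_snd.comp (measurable_snd.comp measurable_snd)) Y0 S0
      (fun ω => rfl) (fun ω => rfl) 0 0 x {ω | Z ω = 0 ∧ S ω = 0 ∧ X ω = x} hM00m
      (fun A hA => hA2 x A hA 0) hsetM00 (fun ω hω => ((hcons0 ω hω.1).1).symm)
      (hPZS 0 0 (Or.inl rfl) (Or.inl rfl)) hYi.integrableOn hC0ne hPD
  -- stratum probabilities
  have hA11ne := hPU 1 1 (Or.inl ⟨rfl, rfl⟩)
  have hA10ne := hPU 1 0 (Or.inr (Or.inl ⟨rfl, rfl⟩))
  have hA00ne := hPU 0 0 (Or.inr (Or.inr ⟨rfl, rfl⟩))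
  -- decompositions
  have hB1dec : {ω | S1 ω = 1} ∩ {ω | X ω = x}
      = {ω | S1 ω = 1 ∧ S0 ω = 1 ∧ X ω = x} ∪ {ω | S1 ω = 1 ∧ S0 ω = 0 ∧ X ω = x} := by
    ext ω
    simp only [Set.mem_inter_iff, Set.mem_union, Set.mem_setOf_eq]
    rcases hS0b ω with h | h <;> simp [h] <;> tauto
  have hB4dec : {ω | S0 ω = 0} ∩ {ω | X ω = x}
      = {ω | S1 ω = 1 ∧ S0 ω = 0 ∧ X ω = x} ∪ {ω | S1 ω = 0 ∧ S0 ω = 0 ∧ X ω = x} := by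
    ext ω
    simp only [Set.mem_inter_iff, Set.mem_union, Set.mem_setOf_eq]
    rcases hS1b ω with h | h <;> simp [h] <;> tauto
  have hdisj1 : Disjoint {ω | S1 ω = 1 ∧ S0 ω = 1 ∧ X ω = x}
      {ω | S1 ω = 1 ∧ S0 ω = 0 ∧ X ω = x} := by
    rw [Set.disjoint_left]
    rintro ω ⟨h1, h0, hx⟩ ⟨h1', h0', hx'⟩
    rw [h0] at h0'
    exact one_ne_zero h0'
  have hdisj4 : Disjoint {ω | S1 ω = 1 ∧ S0 ω = 0 ∧ X ω = x}
      {ω | S1 ω = 0 ∧ S0 ω = 0 ∧ X ω = x} := by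
    rw [Set.disjoint_left]
    rintro ω ⟨h1, h0, hx⟩ ⟨h1', h0', hx'⟩
    rw [h1] at h1'
    exact one_ne_zero h1'
  -- integrabilities on strata
  have hintY1A11 : IntegrableOn Y1 {ω | S1 ω = 1 ∧ S0 ω = 1 ∧ X ω = x} P :=
    hB1int.mono_set (fun ω hω => ⟨hω.1, hω.2.2⟩)
  have hintY1A10 : IntegrableOn Y1 {ω | S1 ω = 1 ∧ S0 ω = 0 ∧ X ω = x} P :=
    hB1int.mono_set (fun ω hω => ⟨hω.1, hω.2.2⟩)
  have hintY0A10 : IntegrableOn Y0 {ω | S1 ω = 1 ∧ S0 ω = 0 ∧ X ω = x} P :=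
    hB4int.mono_set (fun ω hω => ⟨hω.2.1, hω.2.2⟩)
  have hintY0A00 : IntegrableOn Y0 {ω | S1 ω = 0 ∧ S0 ω = 0 ∧ X ω = x} P :=
    hB4int.mono_set (fun ω hω => ⟨hω.2.1, hω.2.2⟩)
  -- mixtures
  have hmA11Y1 : condMeanOn P {ω | S1 ω = 1 ∧ S0 ω = 1 ∧ X ω = x} Y1
      = muZS P X Z S Y 1 1 x := by
    have hmix : condMeanOn P ({ω | S1 ω = 1} ∩ {ω | X ω = x}) Y1
        = condMeanOn P {ω | S1 ω = 1 ∧ S0 ω = 1 ∧ X ω = x} Y1 := by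
      rw [hB1dec]
      exact condMeanOn_union Y1 hA10m hdisj1 hA11ne hA10ne hintY1A11 hintY1A10 (hA4 x hPD).1
    rw [← hmix]
    exact hB1mean
  have hmA10Y1 : condMeanOn P {ω | S1 ω = 1 ∧ S0 ω = 0 ∧ X ω = x} Y1
      = muZS P X Z S Y 1 1 x := by
    rw [← (hA4 x hPD).1]
    exact hmA11Y1
  have hmA10Y0 : condMeanOn P {ω | S1 ω = 1 ∧ S0 ω = 0 ∧ X ω = x} Y0
      = muZS P X Z S Y 0 0 x := by
    have hmix : condMeanOn P ({ω | S0 ω = 0} ∩ {ω | X ω = x}) Y0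
        = condMeanOn P {ω | S1 ω = 1 ∧ S0 ω = 0 ∧ X ω = x} Y0 := by
      rw [hB4dec]
      exact condMeanOn_union Y0 hA00m hdisj4 hA10ne hA00ne hintY0A10 hintY0A00
        (hA4 x hPD).2.symm
    rw [← hmix]
    exact hB4mean
  have hmA00Y0 : condMeanOn P {ω | S1 ω = 0 ∧ S0 ω = 0 ∧ X ω = x} Y0
      = muZS P X Z S Y 0 0 x := by
    rw [(hA4 x hPD).2]
    exact hmA10Y0
  -- a.e. set identifications from monotonicity
  have hae1 : ({ω | S0 ω = 1} ∩ {ω | X ω = x} : Set Ω)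
      =ᵐ[P] {ω | S1 ω = 1 ∧ S0 ω = 1 ∧ X ω = x} := by
    rw [Filter.eventuallyEq_set]
    filter_upwards [hA3] with ω hm
    simp only [Set.mem_inter_iff, Set.mem_setOf_eq]
    constructor
    · rintro ⟨h0, hx⟩
      refine ⟨?_, h0, hx⟩
      rcases hS1b ω with h | h
      · rw [h0, h] at hm; linarith
      · exact h
    · rintro ⟨h1, h0, hx⟩
      exact ⟨h0, hx⟩
  have hae0 : ({ω | S1 ω = 0} ∩ {ω | X ω = x} : Set Ω)
      =ᵐ[P] {ω | S1 ω = 0 ∧ S0 ω = 0 ∧ X ω = x} := by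
    rw [Filter.eventuallyEq_set]
    filter_upwards [hA3] with ω hm
    simp only [Set.mem_inter_iff, Set.mem_setOf_eq]
    constructor
    · rintro ⟨h1, hx⟩
      refine ⟨h1, ?_, hx⟩
      rcases hS0b ω with h | h
      · exact h
      · rw [h1, h] at hm; linarith
    · rintro ⟨h1, h0, hx⟩
      exact ⟨h1, hx⟩
  have hmA11Y0 : condMeanOn P {ω | S1 ω = 1 ∧ S0 ω = 1 ∧ X ω = x} Y0
      = muZS P X Z S Y 0 1 x := by
    rw [← condMeanOn_congr_set hae1]
    exact hB3mean
  have hintY0A11 : IntegrableOn Y0 {ω | S1 ω = 1 ∧ S0 ω = 1 ∧ X ω = x} P := by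
    have h := hB3int
    rwa [IntegrableOn, Measure.restrict_congr_set hae1] at h
  have hmA00Y1 : condMeanOn P {ω | S1 ω = 0 ∧ S0 ω = 0 ∧ X ω = x} Y1
      = muZS P X Z S Y 1 0 x := by
    rw [← condMeanOn_congr_set hae0]
    exact hB2mean
  have hintY1A00 : IntegrableOn Y1 {ω | S1 ω = 0 ∧ S0 ω = 0 ∧ X ω = x} P := by
    have h := hB2int
    rwa [IntegrableOn, Measure.restrict_congr_set hae0] at h
  -- tau values
  have htau11 : tauPO P X S1 S0 Y1 Y0 1 1 x
      = muZS P X Z S Y 1 1 x - muZS P X Z S Y 0 1 x := by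
    show condMeanOn P {ω | S1 ω = 1 ∧ S0 ω = 1 ∧ X ω = x} (fun ω => Y1 ω - Y0 ω) = _
    rw [condMeanOn_sub _ _ hintY1A11 hintY0A11, hmA11Y1, hmA11Y0]
  have htau10 : tauPO P X S1 S0 Y1 Y0 1 0 x
      = muZS P X Z S Y 1 1 x - muZS P X Z S Y 0 0 x := by
    show condMeanOn P {ω | S1 ω = 1 ∧ S0 ω = 0 ∧ X ω = x} (fun ω => Y1 ω - Y0 ω) = _
    rw [condMeanOn_sub _ _ hintY1A10 hintY0A10, hmA10Y1, hmA10Y0]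
  have htau00 : tauPO P X S1 S0 Y1 Y0 0 0 x
      = muZS P X Z S Y 1 0 x - muZS P X Z S Y 0 0 x := by
    show condMeanOn P {ω | S1 ω = 0 ∧ S0 ω = 0 ∧ X ω = x} (fun ω => Y1 ω - Y0 ω) = _
    rw [condMeanOn_sub _ _ hintY1A00 hintY0A00, hmA00Y1, hmA00Y0]
  refine ⟨?_, ?_, ?_, ?_, ?_, ?_⟩
  · -- g00
    show condMeanOn P {ω | X ω = x} (psiA P X Z 1 fun ω' => 1 - S ω') = _
    rw [hψmean 1 _ h1mS_int hC1ne, hb1mS]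
  · -- g10
    show condMeanOn P {ω | X ω = x} (fun ω => psiA P X Z 1 S ω - psiA P X Z 0 S ω) = _
    rw [condMeanOn_sub _ _ (hψint 1 S hS_int) (hψint 0 S hS_int), condMeanOn,
      condMeanOn, hψval 1 S hS_int hC1ne, hψval 0 S hS_int hC0ne,
      mul_div_cancel_right₀ _ hdR, mul_div_cancel_right₀ _ hdR, hb1S, hb0S]
  · -- g11
    show condMeanOn P {ω | X ω = x} (psiA P X Z 0 S) = _
    rw [hψmean 0 S hS_int hC0ne, hb0S]
  · -- tau00
    rw [htau00]
    have hnum : ∫ ω in {ω | X ω = x}, (phiA1_00 P X Z S Y ω - phiA0_00 P X Z S Y ω) ∂P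
        = ((1 - pZs P X Z S 1 x) * (muZS P X Z S Y 1 0 x - muZS P X Z S Y 0 0 x))
            * (P {ω | X ω = x}).toReal := by
      have heq : Set.EqOn (fun ω => phiA1_00 P X Z S Y ω - phiA0_00 P X Z S Y ω)
          (fun ω => (1 : ℝ) * psiA P X Z 1 (fun ω' => Y ω' * (1 - S ω')) ω
            + ((-(1 - pZs P X Z S 1 x) / (1 - pZs P X Z S 0 x))
                * psiA P X Z 0 (fun ω' => Y ω' * (1 - S ω')) ω
              + ((- muZS P X Z S Y 0 0 x) * psiA P X Z 1 (fun ω' => 1 - S ω') ω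
                + (muZS P X Z S Y 0 0 x
                      * ((1 - pZs P X Z S 1 x) / (1 - pZs P X Z S 0 x)))
                    * psiA P X Z 0 (fun ω' => 1 - S ω') ω)))
          {ω | X ω = x} := by
        intro ω hω
        have hx : X ω = x := hω
        simp only [phiA1_00, phiA0_00, hx]
        ring
      rw [setIntegral_congr_fun hDm heq,
        setIntegral_lincomb4 _ _ _ _ (hψint 1 _ hY1mS_int) (hψint 0 _ hY1mS_int)
          (hψint 1 _ h1mS_int) (hψint 0 _ h1mS_int),
        hI1Ym, hI0Ym, hI1m, hI0m]
      field_simp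
      ring
    have hstep : condMeanOn P {ω | X ω = x}
        (fun ω => (phiA1_00 P X Z S Y ω - phiA0_00 P X Z S Y ω)
          / condMeanOn P {ω' | X ω' = X ω} (gA00 P X Z S))
        = condMeanOn P {ω | X ω = x}
          (fun ω => (phiA1_00 P X Z S Y ω - phiA0_00 P X Z S Y ω)
            / (1 - pZs P X Z S 1 x)) := by
      refine condMeanOn_congr_fun hDm ?_
      intro ω hω
      have hx : X ω = x := hω
      simp only
      rw [hx, hg00]
    have hval : condMeanOn P {ω | X ω = x}
        (fun ω => (phiA1_00 P X Z S Y ω - phiA0_00 P X Z S Y ω)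
          / (1 - pZs P X Z S 1 x))
        = muZS P X Z S Y 1 0 x - muZS P X Z S Y 0 0 x := by
      unfold condMeanOn
      rw [integral_div, hnum]
      field_simp
    rw [hstep, hval]
  · -- tau10
    rw [htau10]
    have hnum : ∫ ω in {ω | X ω = x}, (phiA1_10 P X Z S Y ω - phiA0_10 P X Z S Y ω) ∂P
        = ((pZs P X Z S 1 x - pZs P X Z S 0 x)
            * (muZS P X Z S Y 1 1 x - muZS P X Z S Y 0 0 x))
            * (P {ω | X ω = x}).toReal := by
      have heq : Set.EqOn (fun ω => phiA1_10 P X Z S Y ω - phiA0_10 P X Z S Y ω)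
          (fun ω => ((pZs P X Z S 1 x - pZs P X Z S 0 x) / pZs P X Z S 1 x)
              * psiA P X Z 1 (fun ω' => Y ω' * S ω') ω
            + ((- muZS P X Z S Y 1 1 x) * psiA P X Z 0 S ω
              + ((muZS P X Z S Y 1 1 x * (pZs P X Z S 0 x / pZs P X Z S 1 x))
                  * psiA P X Z 1 S ω
                + ((-(pZs P X Z S 1 x - pZs P X Z S 0 x) / (1 - pZs P X Z S 0 x))
                    * psiA P X Z 0 (fun ω' => Y ω' * (1 - S ω')) ω
                  + (muZS P X Z S Y 0 0 x * psiA P X Z 1 (fun ω' => 1 - S ω') ω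
                    + (- (muZS P X Z S Y 0 0 x
                          * ((1 - pZs P X Z S 1 x) / (1 - pZs P X Z S 0 x))))
                        * psiA P X Z 0 (fun ω' => 1 - S ω') ω)))))
          {ω | X ω = x} := by
        intro ω hω
        have hx : X ω = x := hω
        simp only [phiA1_10, phiA0_10, hx]
        ring
      rw [setIntegral_congr_fun hDm heq,
        setIntegral_lincomb6 _ _ _ _ _ _ (hψint 1 _ hYS_int) (hψint 0 S hS_int)
          (hψint 1 S hS_int) (hψint 0 _ hY1mS_int) (hψint 1 _ h1mS_int)
          (hψint 0 _ h1mS_int),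
        hI1YS, hI0S, hI1S, hI0Ym, hI1m, hI0m]
      field_simp
      ring
    have hstep : condMeanOn P {ω | X ω = x}
        (fun ω => (phiA1_10 P X Z S Y ω - phiA0_10 P X Z S Y ω)
          / condMeanOn P {ω' | X ω' = X ω} (gA10 P X Z S))
        = condMeanOn P {ω | X ω = x}
          (fun ω => (phiA1_10 P X Z S Y ω - phiA0_10 P X Z S Y ω)
            / (pZs P X Z S 1 x - pZs P X Z S 0 x)) := by
      refine condMeanOn_congr_fun hDm ?_
      intro ω hω
      have hx : X ω = x := hω
      simp only
      rw [hx, hg10]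
    have hval : condMeanOn P {ω | X ω = x}
        (fun ω => (phiA1_10 P X Z S Y ω - phiA0_10 P X Z S Y ω)
          / (pZs P X Z S 1 x - pZs P X Z S 0 x))
        = muZS P X Z S Y 1 1 x - muZS P X Z S Y 0 0 x := by
      unfold condMeanOn
      rw [integral_div, hnum]
      field_simp
    rw [hstep, hval]
  · -- tau11
    rw [htau11]
    have hnum : ∫ ω in {ω | X ω = x}, (phiA1_11 P X Z S Y ω - phiA0_11 P X Z S Y ω) ∂P
        = ((pZs P X Z S 0 x) * (muZS P X Z S Y 1 1 x - muZS P X Z S Y 0 1 x))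
            * (P {ω | X ω = x}).toReal := by
      have heq : Set.EqOn (fun ω => phiA1_11 P X Z S Y ω - phiA0_11 P X Z S Y ω)
          (fun ω => ((pZs P X Z S 0 x) / pZs P X Z S 1 x)
              * psiA P X Z 1 (fun ω' => Y ω' * S ω') ω
            + ((muZS P X Z S Y 1 1 x) * psiA P X Z 0 S ω
              + ((- (muZS P X Z S Y 1 1 x * (pZs P X Z S 0 x / pZs P X Z S 1 x)))
                  * psiA P X Z 1 S ω
                + (-1 : ℝ) * psiA P X Z 0 (fun ω' => Y ω' * S ω') ω)))
          {ω | X ω = x} := by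
        intro ω hω
        have hx : X ω = x := hω
        simp only [phiA1_11, phiA0_11, hx]
        ring
      rw [setIntegral_congr_fun hDm heq,
        setIntegral_lincomb4 _ _ _ _ (hψint 1 _ hYS_int) (hψint 0 S hS_int)
          (hψint 1 S hS_int) (hψint 0 _ hYS_int),
        hI1YS, hI0S, hI1S, hI0YS]
      field_simp
      ring
    have hstep : condMeanOn P {ω | X ω = x}
        (fun ω => (phiA1_11 P X Z S Y ω - phiA0_11 P X Z S Y ω)
          / condMeanOn P {ω' | X ω' = X ω} (gA11 P X Z S))
        = condMeanOn P {ω | X ω = x}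
          (fun ω => (phiA1_11 P X Z S Y ω - phiA0_11 P X Z S Y ω)
            / (pZs P X Z S 0 x)) := by
      refine condMeanOn_congr_fun hDm ?_
      intro ω hω
      have hx : X ω = x := hω
      simp only
      rw [hx, hg11]
    have hval : condMeanOn P {ω | X ω = x}
        (fun ω => (phiA1_11 P X Z S Y ω - phiA0_11 P X Z S Y ω)
          / (pZs P X Z S 0 x))
        = muZS P X Z S Y 1 1 x - muZS P X Z S Y 0 1 x := by
      unfold condMeanOn
      rw [integral_div, hnum]
      field_simp
    rw [hstep, hval]
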